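/- Let $X$ be a Banach space and $f : [a,b] \to X$ differentiable with Bochner-integrable derivative. Then $\left\| \int_a^b f(t)\,dt - (b-a)\left[\frac{f(a)+f(b)}{4} + \frac{1}{2}f\left(\frac{a+b}{2}\right)\right] \right\| \le \frac{1}{4}(b-a)\int_a^b \|f'(t)\|\,dt$. -/

import Mathlib

open MeasureTheory intervalIntegral

private lemma smul_intInt {X : Type*} [NormedAddCommGroup X] [NormedSpace ℝ X]
    {c d : ℝ} {g : ℝ → X} (hg : IntervalIntegrable g volume c d) {u : ℝ → ℝ}
    (hu : Continuous u) : IntervalIntegrable (fun t => u t • g t) volume c d := by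
  rw [intervalIntegrable_iff] at hg ⊢
  have hg' : IntegrableOn g (Set.uIcc c d) volume := by
    rw [Set.uIcc, integrableOn_Icc_iff_integrableOn_Ioc]
    exact hg
  exact (hg'.continuousOn_smul hu.continuousOn isCompact_uIcc).mono_set Set.Ioc_subset_Icc_self

private lemma parts {X : Type*} [NormedAddCommGroup X] [NormedSpace ℝ X] [CompleteSpace X]
    {c d : ℝ} (hcd : c ≤ d) {f f' : ℝ → X}
    (hderiv : ∀ t ∈ Set.Icc c d, HasDerivAt f (f' t) t)
    (hint : IntervalIntegrable f' volume c d) (e : ℝ) :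
    ∫ t in c..d, f t =
      (d - e) • f d - (c - e) • f c - ∫ t in c..d, (t - e) • f' t := by
  have hIcc : Set.uIcc c d = Set.Icc c d := Set.uIcc_of_le hcd
  have hcont : ContinuousOn f (Set.Icc c d) := fun t ht => (hderiv t ht).continuousAt.continuousWithinAt
  have hfi : IntervalIntegrable f volume c d := by
    apply ContinuousOn.intervalIntegrable; rwa [hIcc]
  have hsi : IntervalIntegrable (fun t => (t - e) • f' t) volume c d :=
    smul_intInt hint (continuous_id.sub continuous_const)
  have hg : ∀ t ∈ Set.uIcc c d, HasDerivAt (fun t => (t - e) • f t) (f t + (t - e) • f' t) t := by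
    intro t ht
    rw [hIcc] at ht
    have := (((hasDerivAt_id t).sub_const e).smul (hderiv t ht))
    rw [one_smul, add_comm] at this
    exact this
  have := integral_eq_sub_of_hasDerivAt hg (hfi.add hsi)
  rw [integral_add hfi hsi] at this
  have h2 : (∫ t in c..d, f t) = ((d - e) • f d - (c - e) • f c) - ∫ t in c..d, (t - e) • f' t := by
    rw [eq_sub_iff_add_eq]; exact this
  exact h2

theorem stmt17 {X : Type*} [NormedAddCommGroup X] [NormedSpace ℝ X] [CompleteSpace X]
    {a b : ℝ} (hab : a < b) {f f' : ℝ → X}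
    (hderiv : ∀ t ∈ Set.Icc a b, HasDerivAt f (f' t) t)
    (hint : IntervalIntegrable f' volume a b) :
    ‖(∫ t in a..b, f t) - (b - a) • ((4 : ℝ)⁻¹ • (f a + f b) + (2 : ℝ)⁻¹ • f ((a + b) / 2))‖ ≤
      (1 / 4) * (b - a) * (∫ t in a..b, ‖f' t‖) := by
  set m := (a + b) / 2 with hm
  have ham : a ≤ m := by rw [hm]; linarith
  have hmb : m ≤ b := by rw [hm]; linarith
  have hsub1 : Set.Icc a m ⊆ Set.Icc a b := Set.Icc_subset_Icc le_rfl hmb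
  have hsub2 : Set.Icc m b ⊆ Set.Icc a b := Set.Icc_subset_Icc ham le_rfl
  have hint1 : IntervalIntegrable f' volume a m :=
    hint.mono_set (by rw [Set.uIcc_of_le ham, Set.uIcc_of_le hab.le]; exact hsub1)
  have hint2 : IntervalIntegrable f' volume m b :=
    hint.mono_set (by rw [Set.uIcc_of_le hmb, Set.uIcc_of_le hab.le]; exact hsub2)
  set c1 := a + (b - a) / 4 with hc1
  set c2 := b - (b - a) / 4 with hc2
  have hp1 := parts ham (fun t ht => hderiv t (hsub1 ht)) hint1 c1
  have hp2 := parts hmb (fun t ht => hderiv t (hsub2 ht)) hint2 c2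
  set I1 := ∫ t in a..m, (t - c1) • f' t with hI1
  set I2 := ∫ t in m..b, (t - c2) • f' t with hI2
  have hcont : ContinuousOn f (Set.Icc a b) :=
    fun t ht => (hderiv t ht).continuousAt.continuousWithinAt
  have hfi1 : IntervalIntegrable f volume a m := by
    apply ContinuousOn.intervalIntegrable
    rw [Set.uIcc_of_le ham]; exact hcont.mono hsub1
  have hfi2 : IntervalIntegrable f volume m b := by
    apply ContinuousOn.intervalIntegrable
    rw [Set.uIcc_of_le hmb]; exact hcont.mono hsub2
  have hsplit : (∫ t in a..b, f t) = (∫ t in a..m, f t) + ∫ t in m..b, f t :=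
    (integral_add_adjacent_intervals hfi1 hfi2).symm
  have hmc1 : m - c1 = (b - a) / 4 := by rw [hm, hc1]; ring
  have hac1 : a - c1 = -((b - a) / 4) := by rw [hc1]; ring
  have hbc2 : b - c2 = (b - a) / 4 := by rw [hc2]; ring
  have hmc2 : m - c2 = -((b - a) / 4) := by rw [hm, hc2]; ring
  have key : (∫ t in a..b, f t) -
      (b - a) • ((4 : ℝ)⁻¹ • (f a + f b) + (2 : ℝ)⁻¹ • f m) = -(I1 + I2) := by
    rw [hsplit, hp1, hp2, hmc1, hac1, hbc2, hmc2]
    simp only [smul_add, smul_smul, neg_smul]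
    module
  rw [key, norm_neg]
  -- bound each piece
  have bound : ∀ (c d e : ℝ), c ≤ d → (∀ t ∈ Set.Icc c d, |t - e| ≤ (b - a) / 4) →
      ∀ (h' : IntervalIntegrable f' volume c d),
      ‖∫ t in c..d, (t - e) • f' t‖ ≤ (b - a) / 4 * ∫ t in c..d, ‖f' t‖ := by
    intro c d e hcd habs h'
    calc ‖∫ t in c..d, (t - e) • f' t‖ ≤ ∫ t in c..d, ‖(t - e) • f' t‖ :=
          norm_integral_le_integral_norm hcd
      _ ≤ ∫ t in c..d, (b - a) / 4 * ‖f' t‖ := by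
          apply integral_mono_on hcd ((smul_intInt h' (continuous_id.sub continuous_const)).norm)
            (h'.norm.const_mul _)
          intro t ht
          rw [norm_smul, Real.norm_eq_abs]
          exact mul_le_mul_of_nonneg_right (habs t ht) (norm_nonneg _)
      _ = (b - a) / 4 * ∫ t in c..d, ‖f' t‖ := integral_const_mul _ _
  have h1 : ‖I1‖ ≤ (b - a) / 4 * ∫ t in a..m, ‖f' t‖ := by
    apply bound a m c1 ham _ hint1
    intro t ht
    rw [abs_le]
    constructor <;> [nlinarith [ht.1, ht.2]; nlinarith [ht.1, ht.2]]
  have h2 : ‖I2‖ ≤ (b - a) / 4 * ∫ t in m..b, ‖f' t‖ := by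
    apply bound m b c2 hmb _ hint2
    intro t ht
    rw [abs_le]
    constructor <;> [nlinarith [ht.1, ht.2]; nlinarith [ht.1, ht.2]]
  have hnsplit : (∫ t in a..b, ‖f' t‖) = (∫ t in a..m, ‖f' t‖) + ∫ t in m..b, ‖f' t‖ :=
    (integral_add_adjacent_intervals hint1.norm hint2.norm).symm
  calc ‖I1 + I2‖ ≤ ‖I1‖ + ‖I2‖ := norm_add_le _ _
    _ ≤ (b - a) / 4 * (∫ t in a..m, ‖f' t‖) + (b - a) / 4 * ∫ t in m..b, ‖f' t‖ :=
        add_le_add h1 h2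
    _ = (1 / 4) * (b - a) * (∫ t in a..b, ‖f' t‖) := by rw [hnsplit]; ring
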